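/- Let E0 > 0. Suppose (γ_n) is a sequence with γ_n > 0 and γ_n → 0, and for each n we have ω_n and μ_n > 0 with (ω_n − E0)(ω_n + 4) − γ_n² > 0 such that α(ω_n; γ_n, E0) = 1/3 and β(ω_n; γ_n, μ_n, E0) = 8/27 (equivalently, the cubic f has the double root P = 2/3 at frequency ω_n). Then γ_n⁴/μ_n → (3√3/16)·E0^{3/2}·(E0+4)² and (ω_n − E0)/γ_n² → (2√3 + √E0)/(√E0·(E0+4)) as n → ∞. -/
import Mathlib


open Filter

/-- `α(ω; γ, E0) = 4γ⁴/(ω σ² ρ²)` with `ρ = ω+4`, `σ = ω - E0 - γ²/ρ`. -/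
noncomputable def alphaPar (E0 γ ω : ℝ) : ℝ :=
  4 * γ^4 / (ω * (ω - E0 - γ^2 / (ω + 4))^2 * (ω + 4)^2)

/-- `β(ω; γ, μ, E0) = 4γ²μ/(σ³ ρ)`. -/
noncomputable def betaPar (E0 γ μ ω : ℝ) : ℝ :=
  4 * γ^2 * μ / ((ω - E0 - γ^2 / (ω + 4))^3 * (ω + 4))

lemma key_exact (E0 : ℝ) (hE0 : 0 < E0) (g m w : ℝ) (hg : 0 < g) (hm : 0 < m)
    (hdom : (w - E0) * (w + 4) - g^2 > 0)
    (ha : alphaPar E0 g w = 1/3) (hb : betaPar E0 g m w = 8/27) :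
    E0 < w ∧
    (w - E0) = g^2 * ((2 * Real.sqrt 3 + Real.sqrt w) / (Real.sqrt w * (w + 4))) ∧
    g^4 / m = 3 * Real.sqrt 3 / 16 * Real.sqrt w * w * (w + 4)^2 := by
  set σ : ℝ := w - E0 - g^2 / (w + 4) with hσdef
  have ha2 : 4 * g^4 / (w * σ^2 * (w + 4)^2) = 1/3 := by
    have := ha; unfold alphaPar at this; rw [← hσdef] at this; exact this
  have hb2 : 4 * g^2 * m / (σ^3 * (w + 4)) = 8/27 := by
    have := hb; unfold betaPar at this; rw [← hσdef] at this; exact this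
  have hD : 0 < w * σ^2 * (w + 4)^2 := by
    by_contra h
    push_neg at h
    have h2 : 4 * g^4 / (w * σ^2 * (w + 4)^2) ≤ 0 :=
      div_nonpos_of_nonneg_of_nonpos (by positivity) h
    rw [ha2] at h2
    norm_num at h2
  have hw : 0 < w := by nlinarith [sq_nonneg (σ * (w + 4))]
  have hρ : (0:ℝ) < w + 4 := by linarith
  have hσρ : σ * (w + 4) = (w - E0) * (w + 4) - g^2 := by
    rw [hσdef]; field_simp
  have hσ : 0 < σ := by
    rcases mul_pos_iff.mp (by rw [hσρ]; exact hdom) with ⟨h1, _⟩ | ⟨_, h2⟩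
    · exact h1
    · linarith
  have hwE : E0 < w := by nlinarith [hdom, sq_nonneg g]
  have ha' : 12 * g^4 = w * σ^2 * (w + 4)^2 := by
    field_simp at ha2
    linarith
  set sw := Real.sqrt w with hswdef
  set s3 := Real.sqrt 3 with hs3def
  have hsw2 : sw^2 = w := Real.sq_sqrt hw.le
  have hs32 : s3^2 = 3 := Real.sq_sqrt (by norm_num)
  have hswpos : 0 < sw := Real.sqrt_pos.mpr hw
  have hs3pos : 0 < s3 := Real.sqrt_pos.mpr (by norm_num)
  have hsq : sw * σ * (w + 4) = 2 * s3 * g^2 := by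
    have h1 : (sw * σ * (w + 4) - 2 * s3 * g^2) * (sw * σ * (w + 4) + 2 * s3 * g^2) = 0 := by
      linear_combination σ^2*(w+4)^2*hsw2 - 4*g^4*hs32 - ha'
    rcases mul_eq_zero.mp h1 with h | h
    · linarith
    · exfalso
      have p1 : 0 < sw * σ * (w + 4) := by positivity
      have p2 : 0 < 2 * s3 * g^2 := by positivity
      linarith
  refine ⟨hwE, ?_, ?_⟩
  · have hmain : (w - E0) * (sw * (w + 4)) = g^2 * (2 * s3 + sw) := by
      linear_combination hsq - sw * hσρ
    field_simp
    linear_combination hmain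
  · have hmval : m = 2 * σ^3 * (w + 4) / (27 * g^2) := by
      have hne : σ^3 * (w + 4) ≠ 0 := by positivity
      field_simp at hb2 ⊢
      linarith
    have hc : (sw * σ * (w + 4))^3 = (2 * s3 * g^2)^3 := by rw [hsq]
    rw [hmval]
    field_simp
    linear_combination (-6*s3)*hc + 6*s3*sw*σ^3*(w+4)^3*hsw2 - 48*g^6*(s3^2+3)*hs32

/-- asymptotics of the ω1-ω2 bifurcation (double root at `P = 2/3`,
i.e. `α = 1/3`, `β = 8/27`): the power law `γ⁴/μ → (3√3/16) E0^{3/2} (E0+4)²` and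
the frequency asymptotics `(ω - E0)/γ² → (2√3 + √E0)/(√E0 (E0+4))`. -/
theorem omega12_bifurcation_asymptotics
    (E0 : ℝ) (hE0 : 0 < E0) (γ μ ω : ℕ → ℝ)
    (hγpos : ∀ n, 0 < γ n)
    (hγ0 : Tendsto γ atTop (nhds 0))
    (hμpos : ∀ n, 0 < μ n)
    (hdom : ∀ n, (ω n - E0) * (ω n + 4) - (γ n)^2 > 0)
    (hα : ∀ n, alphaPar E0 (γ n) (ω n) = 1/3)
    (hβ : ∀ n, betaPar E0 (γ n) (μ n) (ω n) = 8/27) :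
    Tendsto (fun n => (γ n)^4 / μ n) atTop
        (nhds ((3 * Real.sqrt 3 / 16) * E0 ^ ((3:ℝ)/2) * (E0 + 4)^2)) ∧
    Tendsto (fun n => (ω n - E0) / (γ n)^2) atTop
        (nhds ((2 * Real.sqrt 3 + Real.sqrt E0) / (Real.sqrt E0 * (E0 + 4)))) := by
  have hkey := fun n => key_exact E0 hE0 (γ n) (μ n) (ω n) (hγpos n) (hμpos n)
      (hdom n) (hα n) (hβ n)
  have hE0s : 0 < Real.sqrt E0 := Real.sqrt_pos.mpr hE0
  have hs3 : 0 < Real.sqrt 3 := Real.sqrt_pos.mpr (by norm_num)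
  set C : ℝ := Real.sqrt 3 / (2 * Real.sqrt E0) + 1/4 with hCdef
  -- upper bound: ω n ≤ E0 + C * (γ n)^2
  have hub : ∀ n, ω n ≤ E0 + C * (γ n)^2 := by
    intro n
    obtain ⟨h1, h2, _⟩ := hkey n
    have hwpos : 0 < ω n := lt_trans hE0 h1
    have hswn : Real.sqrt E0 ≤ Real.sqrt (ω n) := Real.sqrt_le_sqrt h1.le
    have hswpos : 0 < Real.sqrt (ω n) := Real.sqrt_pos.mpr hwpos
    have hρ : (4:ℝ) < ω n + 4 := by linarith
    have hdpos : 0 < Real.sqrt (ω n) * (ω n + 4) := by positivity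
    have hbound : (2 * Real.sqrt 3 + Real.sqrt (ω n)) / (Real.sqrt (ω n) * (ω n + 4)) ≤ C := by
      rw [div_le_iff₀ hdpos, hCdef]
      have hA : Real.sqrt E0 * 4 ≤ Real.sqrt (ω n) * (ω n + 4) :=
        mul_le_mul hswn hρ.le (by norm_num) hswpos.le
      have ht0 : (0:ℝ) ≤ Real.sqrt 3 / (2 * Real.sqrt E0) := by positivity
      have hB := mul_le_mul_of_nonneg_left hA ht0
      have hBval : Real.sqrt 3 / (2 * Real.sqrt E0) * (Real.sqrt E0 * 4) = 2 * Real.sqrt 3 := by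
        field_simp; ring
      have hC2 : Real.sqrt (ω n) * 4 ≤ Real.sqrt (ω n) * (ω n + 4) :=
        mul_le_mul_of_nonneg_left hρ.le hswpos.le
      linarith
    have hstep : γ n ^ 2 * ((2 * Real.sqrt 3 + Real.sqrt (ω n)) / (Real.sqrt (ω n) * (ω n + 4)))
        ≤ γ n ^ 2 * C := mul_le_mul_of_nonneg_left hbound (sq_nonneg (γ n))
    rw [← h2] at hstep
    linarith
  have hγ2 : Tendsto (fun n => (γ n)^2) atTop (nhds 0) := by
    have := hγ0.pow 2
    simpa using this
  have hω : Tendsto ω atTop (nhds E0) := by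
    have hupper : Tendsto (fun n => E0 + C * (γ n)^2) atTop (nhds E0) := by
      have := (tendsto_const_nhds (x := E0) (f := atTop (α := ℕ))).add
        ((tendsto_const_nhds (x := C) (f := atTop (α := ℕ))).mul hγ2)
      simpa using this
    exact tendsto_of_tendsto_of_tendsto_of_le_of_le tendsto_const_nhds hupper
      (fun n => (hkey n).1.le) hub
  have hsw : Tendsto (fun n => Real.sqrt (ω n)) atTop (nhds (Real.sqrt E0)) :=
    (Real.continuous_sqrt.tendsto E0).comp hω
  constructor
  · have ht : Tendsto (fun n => 3 * Real.sqrt 3 / 16 * Real.sqrt (ω n) * (ω n) * (ω n + 4)^2)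
        atTop (nhds (3 * Real.sqrt 3 / 16 * Real.sqrt E0 * E0 * (E0 + 4)^2)) := by
      exact ((tendsto_const_nhds.mul hsw).mul hω).mul ((hω.add_const 4).pow 2)
    have heq : (3 * Real.sqrt 3 / 16) * E0 ^ ((3:ℝ)/2) * (E0 + 4)^2
        = 3 * Real.sqrt 3 / 16 * Real.sqrt E0 * E0 * (E0 + 4)^2 := by
      rw [show ((3:ℝ)/2) = 1/2 + 1 by norm_num, Real.rpow_add hE0, Real.rpow_one,
        ← Real.sqrt_eq_rpow]
      ring
    rw [heq]
    exact ht.congr (fun n => ((hkey n).2.2).symm)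
  · have ht : Tendsto (fun n => (2 * Real.sqrt 3 + Real.sqrt (ω n)) / (Real.sqrt (ω n) * (ω n + 4)))
        atTop (nhds ((2 * Real.sqrt 3 + Real.sqrt E0) / (Real.sqrt E0 * (E0 + 4)))) := by
      apply Tendsto.div (tendsto_const_nhds.add hsw) (hsw.mul (hω.add_const 4))
      exact (mul_pos hE0s (by linarith)).ne'
    apply ht.congr
    intro n
    have h2 := (hkey n).2.1
    have hg2 : (γ n)^2 ≠ 0 := pow_ne_zero 2 (hγpos n).ne'
    rw [h2, mul_div_cancel_left₀ _ hg2]
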